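/- (Burke's theorem, discrete time.) If the initial queue length is distributed according to π_Q and the arrivals are i.i.d. Bernoulli(λ), then the departure sequence is i.i.d. Bernoulli(λ): for every n ≥ 1 and every y = (ỹ_0,…,ỹ_{n−1}) ∈ {0,1}^n, ∑_{x ∈ ℕ×{0,1}^{n−1}} P_X(x)·W(y|x) = ∏_{i=0}^{n−1} λ^{ỹ_i} λ̄^{1−ỹ_i}. -/

import Mathlib

open scoped BigOperators

noncomputable section

/-- The state space `𝕏 = {(0,q) : q ∈ ℕ} ∪ {(1,q) : q ≥ 1}` of the joint chain,
with the departure indicator encoded as a `Bool`. -/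
abbrev XS : Type := {p : Bool × ℕ // p.1 = true → 1 ≤ p.2}

/-- `ρ = λμ̄/(λ̄μ)`. -/
def rho (lam mu : ℝ) : ℝ := lam * (1 - mu) / ((1 - lam) * mu)

/-- The invariant distribution `π_Q` of the queue-length chain. -/
def piQ (lam mu : ℝ) (q : ℕ) : ℝ :=
  if q = 0 then ((1 - lam) * mu - lam * (1 - mu)) / mu
  else ((1 - lam) * mu - lam * (1 - mu)) / (mu * (1 - mu)) * rho lam mu ^ q

/-- The queue kernel `K` on ℕ. -/
def kerQ (lam mu : ℝ) (q q' : ℕ) : ℝ :=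
  if q = 0 then (if q' = 1 then lam else if q' = 0 then 1 - lam else 0)
  else if q' + 1 = q then (1 - lam) * mu
  else if q' = q + 1 then lam * (1 - mu)
  else if q' = q then 1 - lam * (1 - mu) - (1 - lam) * mu
  else 0

/-- The invariant distribution `π_Ψ` of the joint chain `(ỹ, q)`. -/
def piPsi (lam mu : ℝ) : Bool × ℕ → ℝ
  | (false, 0) => piQ lam mu 0
  | (false, q + 1) => (1 - mu) * piQ lam mu (q + 1)
  | (true, 0) => 0
  | (true, q + 1) => mu * piQ lam mu (q + 1)

/-- The transition kernel `P` of the joint chain: from `(ỹ,q)`, with arrival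
`x̃ = q' - q + ỹ ∈ {0,1}` (probability `λ` resp. `λ̄`), the next state is `(ỹ',q')`
with departure probability `1,0` at `q' = 0` and `μ̄, μ` at `q' ≥ 1`. -/
def kerP (lam mu : ℝ) (ψ ψ' : Bool × ℕ) : ℝ :=
  (if ((ψ'.2 : ℤ) - (ψ.2 : ℤ) + (if ψ.1 then 1 else 0)) = 1 then lam
   else if ((ψ'.2 : ℤ) - (ψ.2 : ℤ) + (if ψ.1 then 1 else 0)) = 0 then 1 - lam
   else 0) *
  (if ψ'.2 = 0 then (if ψ'.1 then 0 else 1) else (if ψ'.1 then mu else 1 - mu))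

/-- The `i`-step kernel `P^i` of the joint chain. -/
def kerIter (lam mu : ℝ) : ℕ → Bool × ℕ → Bool × ℕ → ℝ
  | 0, ψ, ψ' => if ψ = ψ' then 1 else 0
  | i + 1, ψ, ψ' => ∑' ψ'' : XS, kerIter lam mu i ψ ψ''.val * kerP lam mu ψ''.val ψ'

/-- The information-density function `f` on the joint state space. -/
def fInfo (lam mu : ℝ) : Bool × ℕ → ℝ
  | (false, 0) => Real.log (1 / (1 - lam))
  | (false, _ + 1) => Real.log ((1 - mu) / (1 - lam))
  | (true, 0) => 0
  | (true, _ + 1) => Real.log (mu / lam)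

/-- The binary entropy function. -/
def Hbin (p : ℝ) : ℝ := -(p * Real.log p) - (1 - p) * Real.log (1 - p)

/-- The capacity `C = H(λ) - (λ/μ) H(μ)` of the timing channel. -/
def Cap (lam mu : ℝ) : ℝ := Hbin lam - lam / mu * Hbin mu

/-- The constant `c_{M0}`. -/
def cM0 (lam mu : ℝ) : ℝ :=
  (1 - lam) / (1 - mu) *
    (mu * Real.log (mu / lam) + (1 - mu) * Real.log ((1 - mu) / (1 - lam)) - Cap lam mu)

/-- The constant `c_{M̃}`. -/
def cMt (lam mu : ℝ) : ℝ :=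
  cM0 lam mu / mu + (Cap lam mu - Real.log (mu / lam)) * piQ lam mu 0 / (1 - mu)

/-- The partial stationary sum `M(q,0) = ∑_{ψ' ∈ 𝕏, q' ≤ q} (C - f(ψ')) π_Ψ(ψ')`. -/
def M0 (lam mu : ℝ) (q : ℕ) : ℝ :=
  ∑' ψ : {p : Bool × ℕ // (p.1 = true → 1 ≤ p.2) ∧ p.2 ≤ q},
    (Cap lam mu - fInfo lam mu ψ.val) * piPsi lam mu ψ.val

/-- The partial stationary sum
`M(q,1) = ∑_{ψ' ∈ 𝕏 : q' < q, or q' = q and ỹ' = 1} (C - f(ψ')) π_Ψ(ψ')`. -/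
def M1 (lam mu : ℝ) (q : ℕ) : ℝ :=
  ∑' ψ : {p : Bool × ℕ // (p.1 = true → 1 ≤ p.2) ∧ (p.2 < q ∨ (p.2 = q ∧ p.1 = true))},
    (Cap lam mu - fInfo lam mu ψ.val) * piPsi lam mu ψ.val

/-- `r(ψ,i) = ∑_{ψ' ∈ 𝕏} (f(ψ') - C) π_Ψ(ψ') P^i(ψ',ψ)`. -/
def rfun (lam mu : ℝ) (i : ℕ) (ψ : Bool × ℕ) : ℝ :=
  ∑' ψ' : XS, (fInfo lam mu ψ'.val - Cap lam mu) * piPsi lam mu ψ'.val *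
    kerIter lam mu i ψ'.val ψ

/-- `R(ψ) = ∑_{i=0}^∞ r(ψ,i)`. -/
def Rfun (lam mu : ℝ) (ψ : Bool × ℕ) : ℝ := ∑' i : ℕ, rfun lam mu i ψ

/-- The stationary autocovariance
`Cov_i = ∑_{ψ,ψ' ∈ 𝕏} π_Ψ(ψ)(f(ψ)-C)(f(ψ')-C) P^i(ψ,ψ')`. -/
def covI (lam mu : ℝ) (i : ℕ) : ℝ :=
  ∑' p : XS × XS,
    piPsi lam mu p.1.val * (fInfo lam mu p.1.val - Cap lam mu) *
      (fInfo lam mu p.2.val - Cap lam mu) * kerIter lam mu i p.1.val p.2.val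

/-- The Lyapunov function `V(ỹ,q) = (q - ỹ)/(μ - λ)`. -/
def Vlya (lam mu : ℝ) (ψ : Bool × ℕ) : ℝ :=
  ((ψ.2 : ℝ) - (if ψ.1 then 1 else 0)) / (mu - lam)

/-- Stationary path probability `ℙ_n` for block length `n = m+1`:
`π_Ψ(ψ_0) ∏_{l=0}^{n-2} P(ψ_l, ψ_{l+1})`. -/
def pathP (lam mu : ℝ) (m : ℕ) (ψ : Fin (m + 1) → XS) : ℝ :=
  piPsi lam mu (ψ 0).val * ∏ l : Fin m, kerP lam mu (ψ l.castSucc).val (ψ l.succ).val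

/-- The partial sum `S_n = ∑_{i=0}^{n-1} f(ψ_i)` along a path, for `n = m+1`. -/
def Spath (lam mu : ℝ) (m : ℕ) (ψ : Fin (m + 1) → XS) : ℝ :=
  ∑ i : Fin (m + 1), fInfo lam mu (ψ i).val

/-- `Var_n = ∑_paths ℙ_n(path) (S_n - nC)^2`, for `n = m+1`. -/
def VarN (lam mu : ℝ) (m : ℕ) : ℝ :=
  ∑' ψ : Fin (m + 1) → XS,
    pathP lam mu m ψ * (Spath lam mu m ψ - ((m : ℝ) + 1) * Cap lam mu) ^ 2

/-- The explicit stationary variance `V₀` of `f`. -/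
def V0 (lam mu : ℝ) : ℝ :=
  Real.log (1 / (1 - lam)) ^ 2 * piQ lam mu 0 +
    Real.log (mu / lam) ^ 2 * mu * (1 - piQ lam mu 0) +
    Real.log ((1 - mu) / (1 - lam)) ^ 2 * (1 - mu) * (1 - piQ lam mu 0) -
    Cap lam mu ^ 2

/-- The explicit sum of autocovariances `Σ = ∑_{i=0}^∞ Cov_i`. -/
def SigSum (lam mu : ℝ) : ℝ :=
  Real.log (1 / (1 - lam)) *
      (-(cMt lam mu) * rho lam mu / (1 - rho lam mu) - cM0 lam mu * rho lam mu) +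
    Real.log (mu / lam) * cM0 lam mu * rho lam mu / (1 - rho lam mu) +
    Real.log ((1 - mu) / (1 - lam)) * (rho lam mu / (1 - rho lam mu)) *
      (cMt lam mu - rho lam mu * cM0 lam mu)

/-- The asymptotic standard deviation `σ = √(-V₀ + 2Σ)`. -/
def sigmaBE (lam mu : ℝ) : ℝ := Real.sqrt (-(V0 lam mu) + 2 * SigSum lam mu)

/-- The standard normal cumulative distribution function `Φ`. -/
def stdNormCDF (x : ℝ) : ℝ :=
  (Real.sqrt (2 * Real.pi))⁻¹ * ∫ t in Set.Iic x, Real.exp (-(t ^ 2) / 2)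

/-- Single-step departure probability `w(ỹ|q)` (queues that have gone negative,
which can only happen on a zero-probability trajectory, are treated like `q = 0`). -/
def wdep (mu : ℝ) (y : Bool) (q : ℤ) : ℝ :=
  if q ≤ 0 then (if y then 0 else 1) else (if y then mu else 1 - mu)

/-- The queue trajectory `q_i = q_{i-1} + x̃_i - ỹ_{i-1}`, with arrivals `x̃_i = x i`
for `i ≥ 1` and departures `ỹ_i = y i`. -/
def qtraj (q0 : ℕ) (x y : ℕ → Bool) : ℕ → ℤ
  | 0 => (q0 : ℤ)
  | i + 1 => qtraj q0 x y i + (if x (i + 1) then 1 else 0) - (if y i then 1 else 0)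

/-- The block channel `W(y|x) = ∏_{i=0}^{n-1} w(ỹ_i|q_i)` of the queue channel. -/
def Wchan (mu : ℝ) (n : ℕ) (q0 : ℕ) (x y : ℕ → Bool) : ℝ :=
  ∏ i ∈ Finset.range n, wdep mu (y i) (qtraj q0 x y i)

/-- The input distribution `P_X(q_0, x̃) = π_Q(q_0) ∏_{i=1}^{n-1} λ^{x̃_i} λ̄^{1-x̃_i}`. -/
def inpP (lam mu : ℝ) (n : ℕ) (q0 : ℕ) (x : ℕ → Bool) : ℝ :=
  piQ lam mu q0 * ∏ i ∈ Finset.range (n - 1), (if x (i + 1) then lam else 1 - lam)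

/-- Extend an arrival word `(x̃_1, …, x̃_m) ∈ {0,1}^m` to a function on ℕ. -/
def extX (m : ℕ) (xf : Fin m → Bool) : ℕ → Bool :=
  fun i => if h : 1 ≤ i ∧ i ≤ m then xf ⟨i - 1, by omega⟩ else false

/-- Extend an output word `(ỹ_0, …, ỹ_{n-1}) ∈ {0,1}^n` to a function on ℕ. -/
def extY (n : ℕ) (yf : Fin n → Bool) : ℕ → Bool :=
  fun i => if h : i < n then yf ⟨i, h⟩ else false

end
namespace BurkeAux

variable {lam mu : ℝ}

lemma mu_pos (h0 : 0 < lam) (h1 : lam < mu) : 0 < mu := h0.trans h1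

lemma rho_nonneg (h0 : 0 < lam) (h1 : lam < mu) (h2 : mu < 1) : 0 ≤ rho lam mu := by
  have hmu : 0 < mu := h0.trans h1
  have hlam1 : lam < 1 := h1.trans h2
  exact div_nonneg (by nlinarith) (by nlinarith)

lemma rho_lt_one (h0 : 0 < lam) (h1 : lam < mu) (h2 : mu < 1) : rho lam mu < 1 := by
  have hmu : 0 < mu := h0.trans h1
  have hlam1 : lam < 1 := h1.trans h2
  rw [rho, div_lt_one (by nlinarith)]
  nlinarith

lemma piQ_zero_eq : piQ lam mu 0 = (mu - lam) / mu := by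
  show ((1 - lam) * mu - lam * (1 - mu)) / mu = _
  congr 1
  ring

lemma piQ_succ (q : ℕ) :
    piQ lam mu (q + 1) = (mu - lam) / (mu * (1 - mu)) * rho lam mu ^ (q + 1) := by
  have h : (1 - lam) * mu - lam * (1 - mu) = mu - lam := by ring
  rw [piQ, if_neg (Nat.succ_ne_zero q), h]

lemma piQ_nonneg (h0 : 0 < lam) (h1 : lam < mu) (h2 : mu < 1) (q : ℕ) :
    0 ≤ piQ lam mu q := by
  have hmu : 0 < mu := h0.trans h1
  cases q with
  | zero => rw [piQ_zero_eq]; apply div_nonneg <;> linarith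
  | succ q =>
    rw [piQ_succ]
    have h3 : 0 ≤ rho lam mu := rho_nonneg h0 h1 h2
    have : (0:ℝ) ≤ (mu - lam) / (mu * (1 - mu)) := by
      apply div_nonneg <;> nlinarith
    positivity

lemma rec_pi0 (h0 : 0 < lam) (h1 : lam < mu) (h2 : mu < 1) :
    (1 - lam) * mu * piQ lam mu 1 = lam * piQ lam mu 0 := by
  have hmu : (0:ℝ) < mu := h0.trans h1
  have hlam1 : lam < 1 := h1.trans h2
  have e1 : mu ≠ 0 := ne_of_gt hmu
  have e2 : (1:ℝ) - mu ≠ 0 := by linarith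
  have e3 : (1:ℝ) - lam ≠ 0 := by linarith
  rw [piQ_succ 0, piQ_zero_eq, rho, zero_add, pow_one]
  field_simp

lemma rec_piS (h0 : 0 < lam) (h1 : lam < mu) (h2 : mu < 1) (q : ℕ) :
    (1 - lam) * mu * piQ lam mu (q + 2) = lam * (1 - mu) * piQ lam mu (q + 1) := by
  have hmu : (0:ℝ) < mu := h0.trans h1
  have hlam1 : lam < 1 := h1.trans h2
  have e1 : mu ≠ 0 := ne_of_gt hmu
  have e2 : (1:ℝ) - mu ≠ 0 := by linarith
  have e3 : (1:ℝ) - lam ≠ 0 := by linarith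
  have key : (1 - lam) * mu * rho lam mu = lam * (1 - mu) := by
    rw [rho]; field_simp
  rw [piQ_succ (q+1), piQ_succ q]
  have h4 : rho lam mu ^ (q + 2) = rho lam mu ^ (q + 1) * rho lam mu := by
    rw [← pow_succ]
  rw [h4]
  linear_combination ((mu - lam) / (mu * (1 - mu)) * rho lam mu ^ (q + 1)) * key

lemma summable_piQ_succ_mul (h0 : 0 < lam) (h1 : lam < mu) (h2 : mu < 1)
    (H : ℕ → ℝ) (hH0 : ∀ q, 0 ≤ H q) (hH1 : ∀ q, H q ≤ 1) :
    Summable fun q : ℕ => piQ lam mu (q + 1) * H q := by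
  have hr0 := rho_nonneg h0 h1 h2
  have hr1 := rho_lt_one h0 h1 h2
  apply Summable.of_nonneg_of_le
    (f := fun q => ((mu - lam) / (mu * (1 - mu)) * rho lam mu) * rho lam mu ^ q)
    (fun q => mul_nonneg (piQ_nonneg h0 h1 h2 _) (hH0 q))
  · intro q
    calc piQ lam mu (q + 1) * H q ≤ piQ lam mu (q + 1) * 1 := by
          apply mul_le_mul_of_nonneg_left (hH1 q) (piQ_nonneg h0 h1 h2 _)
      _ = (mu - lam) / (mu * (1 - mu)) * rho lam mu * rho lam mu ^ q := by
          rw [mul_one, piQ_succ, pow_succ]; ring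
  · exact (summable_geometric_of_lt_one hr0 hr1).mul_left _

lemma summable_piQ (h0 : 0 < lam) (h1 : lam < mu) (h2 : mu < 1) :
    Summable (piQ lam mu) := by
  apply (summable_nat_add_iff 1).mp
  simpa using summable_piQ_succ_mul h0 h1 h2 (fun _ => 1) (fun _ => zero_le_one) (fun _ => le_refl 1)

lemma summable_piQ_mul (h0 : 0 < lam) (h1 : lam < mu) (h2 : mu < 1)
    (G : ℕ → ℝ) (hG0 : ∀ q, 0 ≤ G q) (hG1 : ∀ q, G q ≤ 1) :
    Summable fun q : ℕ => piQ lam mu q * G q := by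
  apply Summable.of_nonneg_of_le
    (fun q => mul_nonneg (piQ_nonneg h0 h1 h2 _) (hG0 q)) _ (summable_piQ h0 h1 h2)
  intro q
  calc piQ lam mu q * G q ≤ piQ lam mu q * 1 :=
        mul_le_mul_of_nonneg_left (hG1 q) (piQ_nonneg h0 h1 h2 _)
    _ = piQ lam mu q := mul_one _

lemma tsum_piQ_succ (h0 : 0 < lam) (h1 : lam < mu) (h2 : mu < 1) :
    ∑' q : ℕ, piQ lam mu (q + 1) = lam / mu := by
  have hr0 := rho_nonneg h0 h1 h2
  have hr1 := rho_lt_one h0 h1 h2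
  have hmu : (0:ℝ) < mu := h0.trans h1
  have hlam1 : lam < 1 := h1.trans h2
  have h : ∀ q : ℕ, piQ lam mu (q + 1)
      = ((mu - lam) / (mu * (1 - mu)) * rho lam mu) * rho lam mu ^ q := by
    intro q; rw [piQ_succ, pow_succ]; ring
  have e1 : mu ≠ 0 := ne_of_gt hmu
  have e2 : (1:ℝ) - mu ≠ 0 := by linarith
  have e3 : (1:ℝ) - lam ≠ 0 := by linarith
  have e4 : mu - lam ≠ 0 := by linarith
  rw [tsum_congr h, tsum_mul_left, tsum_geometric_of_lt_one hr0 hr1, rho]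
  have h2' : (1:ℝ) - lam * (1 - mu) / ((1 - lam) * mu) = (mu - lam) / ((1 - lam) * mu) := by
    field_simp
    ring
  rw [h2']
  rw [inv_div]
  field_simp

lemma tsum_piQ (h0 : 0 < lam) (h1 : lam < mu) (h2 : mu < 1) :
    ∑' q : ℕ, piQ lam mu q = 1 := by
  rw [Summable.tsum_eq_zero_add (summable_piQ h0 h1 h2), piQ_zero_eq]
  have : ∑' q : ℕ, piQ lam mu (q + 1) = lam / mu := tsum_piQ_succ h0 h1 h2
  rw [this]
  have hmu : (0:ℝ) < mu := h0.trans h1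
  field_simp
  ring

lemma key_shift (h0 : 0 < lam) (h1 : lam < mu) (h2 : mu < 1)
    (H : ℕ → ℝ) (hH0 : ∀ q, 0 ≤ H q) (hH1 : ∀ q, H q ≤ 1) :
    (1 - lam) * mu * ∑' q : ℕ, piQ lam mu (q + 1) * H q
      = lam * piQ lam mu 0 * H 0
        + lam * (1 - mu) * ∑' q : ℕ, piQ lam mu (q + 1) * H (q + 1) := by
  have hs : Summable fun q : ℕ => piQ lam mu (q + 1) * H q :=
    summable_piQ_succ_mul h0 h1 h2 H hH0 hH1
  rw [← tsum_mul_left, Summable.tsum_eq_zero_add (hs.mul_left _),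
    ← tsum_mul_left (a := lam * (1 - mu))]
  congr 1
  · have := rec_pi0 h0 h1 h2
    linear_combination H 0 * this
  · apply tsum_congr
    intro q
    have := rec_piS h0 h1 h2 q
    linear_combination H (q + 1) * this

def nq (q0 : ℕ) (x1 y0 : Bool) : ℕ :=
  q0 + (if x1 then 1 else 0) - (if y0 then 1 else 0)

lemma wdep_cast (y : Bool) (q : ℕ) :
    wdep mu y (q : ℤ) =
      if q = 0 then (if y then 0 else 1) else (if y then mu else 1 - mu) := by
  have h : ((q : ℤ) ≤ 0) ↔ q = 0 := by omega
  simp [wdep, h]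

lemma step_lemma (h0 : 0 < lam) (h1 : lam < mu) (h2 : mu < 1)
    (G : ℕ → ℝ) (hG0 : ∀ q, 0 ≤ G q) (hG1 : ∀ q, G q ≤ 1) (y0 : Bool) :
    ∑' q0 : ℕ, piQ lam mu q0 * wdep mu y0 (q0 : ℤ) *
        ((1 - lam) * G (nq q0 false y0) + lam * G (nq q0 true y0))
      = (if y0 then lam else 1 - lam) * ∑' q : ℕ, piQ lam mu q * G q := by
  have hlam1 : lam < 1 := h1.trans h2
  have hmu : (0:ℝ) < mu := h0.trans h1
  have hw0 : ∀ q : ℤ, 0 ≤ wdep mu y0 q := by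
    intro q; unfold wdep; split <;> split <;> linarith
  have hw1 : ∀ q : ℤ, wdep mu y0 q ≤ 1 := by
    intro q; unfold wdep; split <;> split <;> linarith
  have hcomb0 : ∀ a b : ℕ, 0 ≤ (1 - lam) * G a + lam * G b := by
    intro a b
    have := hG0 a; have := hG0 b
    nlinarith
  have hcomb1 : ∀ a b : ℕ, (1 - lam) * G a + lam * G b ≤ 1 := by
    intro a b
    have := hG1 a; have := hG1 b
    nlinarith
  have hsG : Summable fun q : ℕ => piQ lam mu q * G q :=
    summable_piQ_mul h0 h1 h2 G hG0 hG1
  have hsL : Summable fun q0 : ℕ => piQ lam mu q0 * wdep mu y0 (q0 : ℤ) *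
      ((1 - lam) * G (nq q0 false y0) + lam * G (nq q0 true y0)) := by
    apply Summable.congr (f := fun q0 : ℕ => piQ lam mu q0 *
      (wdep mu y0 (q0 : ℤ) * ((1 - lam) * G (nq q0 false y0) + lam * G (nq q0 true y0))))
    · apply summable_piQ_mul h0 h1 h2
      · intro q; exact mul_nonneg (hw0 _) (hcomb0 _ _)
      · intro q
        calc wdep mu y0 (q : ℤ) * ((1 - lam) * G (nq q false y0) + lam * G (nq q true y0))
            ≤ 1 * 1 := mul_le_mul (hw1 _) (hcomb1 _ _) (hcomb0 _ _) zero_le_one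
          _ = 1 := mul_one 1
    · intro q; ring
  have hsT : ∀ k : ℕ, Summable fun q : ℕ => piQ lam mu (q + 1) * G (q + k) := by
    intro k
    exact summable_piQ_succ_mul h0 h1 h2 (fun q => G (q + k)) (fun q => hG0 _) (fun q => hG1 _)
  rw [Summable.tsum_eq_zero_add hsL, Summable.tsum_eq_zero_add hsG]
  cases y0 with
  | false =>
    have K := key_shift h0 h1 h2 (fun q => G (q + 1)) (fun q => hG0 _) (fun q => hG1 _)
    have hz : piQ lam mu 0 * wdep mu false ((0 : ℕ) : ℤ) *
        ((1 - lam) * G (nq 0 false false) + lam * G (nq 0 true false))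
        = piQ lam mu 0 * ((1 - lam) * G 0 + lam * G 1) := by
      rw [wdep_cast]
      simp [nq]
    rw [hz]
    have hsh : ∀ b : ℕ, piQ lam mu (b + 1) * wdep mu false ((b + 1 : ℕ) : ℤ) *
        ((1 - lam) * G (nq (b + 1) false false) + lam * G (nq (b + 1) true false))
        = piQ lam mu (b + 1) * (1 - mu) * ((1 - lam) * G (b + 1) + lam * G (b + 2)) := by
      intro b
      rw [wdep_cast]
      simp [nq]
    rw [tsum_congr hsh]
    have hinner : ∑' b : ℕ, piQ lam mu (b + 1) * (1 - mu) *
        ((1 - lam) * G (b + 1) + lam * G (b + 2))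
        = (1 - mu) * (1 - lam) * ∑' q : ℕ, piQ lam mu (q + 1) * G (q + 1)
          + (1 - mu) * lam * ∑' q : ℕ, piQ lam mu (q + 1) * G (q + 2) := by
      rw [← tsum_mul_left, ← tsum_mul_left,
        ← Summable.tsum_add (((hsT 1).mul_left _)) (((hsT 2).mul_left _))]
      apply tsum_congr
      intro b
      ring
    rw [hinner]
    simp only [Bool.false_eq_true, if_false]
    linear_combination -K
  | true =>
    have K := key_shift h0 h1 h2 G hG0 hG1
    have hz : piQ lam mu 0 * wdep mu true ((0 : ℕ) : ℤ) *
        ((1 - lam) * G (nq 0 false true) + lam * G (nq 0 true true)) = 0 := by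
      rw [wdep_cast]
      simp
    rw [hz]
    have hsh : ∀ b : ℕ, piQ lam mu (b + 1) * wdep mu true ((b + 1 : ℕ) : ℤ) *
        ((1 - lam) * G (nq (b + 1) false true) + lam * G (nq (b + 1) true true))
        = piQ lam mu (b + 1) * mu * ((1 - lam) * G b + lam * G (b + 1)) := by
      intro b
      rw [wdep_cast]
      simp [nq]
    rw [tsum_congr hsh]
    have hinner : ∑' b : ℕ, piQ lam mu (b + 1) * mu *
        ((1 - lam) * G b + lam * G (b + 1))
        = mu * (1 - lam) * ∑' q : ℕ, piQ lam mu (q + 1) * G q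
          + mu * lam * ∑' q : ℕ, piQ lam mu (q + 1) * G (q + 1) := by
      rw [← tsum_mul_left, ← tsum_mul_left,
        ← Summable.tsum_add (Summable.mul_left _ ((hsT 0).congr (fun q => by simp)))
          (((hsT 1).mul_left _))]
      apply tsum_congr
      intro b
      ring
    rw [hinner]
    simp only [if_true]
    linear_combination K

lemma wdep_nonneg (hm0 : 0 ≤ mu) (hm1 : mu ≤ 1) (yb : Bool) (q : ℤ) :
    0 ≤ wdep mu yb q := by
  unfold wdep; split <;> split <;> linarith

lemma wdep_le_one (hm0 : 0 ≤ mu) (hm1 : mu ≤ 1) (yb : Bool) (q : ℤ) :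
    wdep mu yb q ≤ 1 := by
  unfold wdep; split <;> split <;> linarith

lemma Wchan_nonneg (hm0 : 0 ≤ mu) (hm1 : mu ≤ 1) (n q0 : ℕ) (x y : ℕ → Bool) :
    0 ≤ Wchan mu n q0 x y :=
  Finset.prod_nonneg fun _ _ => wdep_nonneg hm0 hm1 _ _

lemma Wchan_le_one (hm0 : 0 ≤ mu) (hm1 : mu ≤ 1) (n q0 : ℕ) (x y : ℕ → Bool) :
    Wchan mu n q0 x y ≤ 1 :=
  Finset.prod_le_one (fun _ _ => wdep_nonneg hm0 hm1 _ _) (fun _ _ => wdep_le_one hm0 hm1 _ _)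

lemma prodArr_nonneg (hl0 : 0 ≤ lam) (hl1 : lam ≤ 1) (l : ℕ) (x : ℕ → Bool) :
    0 ≤ ∏ i ∈ Finset.range l, (if x (i + 1) then lam else 1 - lam) :=
  Finset.prod_nonneg fun _ _ => by split <;> linarith

lemma prodArr_le_one (hl0 : 0 ≤ lam) (hl1 : lam ≤ 1) (l : ℕ) (x : ℕ → Bool) :
    (∏ i ∈ Finset.range l, (if x (i + 1) then lam else 1 - lam)) ≤ 1 :=
  Finset.prod_le_one (fun _ _ => by split <;> linarith) (fun _ _ => by split <;> linarith)

lemma inpP_nonneg (h0 : 0 < lam) (h1 : lam < mu) (h2 : mu < 1) (n q0 : ℕ) (x : ℕ → Bool) :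
    0 ≤ inpP lam mu n q0 x := by
  have hlam1 : lam < 1 := h1.trans h2
  exact mul_nonneg (piQ_nonneg h0 h1 h2 q0) (prodArr_nonneg h0.le hlam1.le _ _)

lemma inpP_le_piQ (h0 : 0 < lam) (h1 : lam < mu) (h2 : mu < 1) (n q0 : ℕ) (x : ℕ → Bool) :
    inpP lam mu n q0 x ≤ piQ lam mu q0 := by
  have hlam1 : lam < 1 := h1.trans h2
  calc inpP lam mu n q0 x
      ≤ piQ lam mu q0 * 1 :=
        mul_le_mul_of_nonneg_left (prodArr_le_one h0.le hlam1.le _ _) (piQ_nonneg h0 h1 h2 q0)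
    _ = piQ lam mu q0 := mul_one _

lemma term_nonneg (h0 : 0 < lam) (h1 : lam < mu) (h2 : mu < 1) (n q0 : ℕ) (x y : ℕ → Bool) :
    0 ≤ inpP lam mu n q0 x * Wchan mu n q0 x y := by
  have hmu : (0:ℝ) < mu := h0.trans h1
  exact mul_nonneg (inpP_nonneg h0 h1 h2 n q0 x) (Wchan_nonneg hmu.le h2.le n q0 x y)

lemma term_le_piQ (h0 : 0 < lam) (h1 : lam < mu) (h2 : mu < 1) (n q0 : ℕ) (x y : ℕ → Bool) :
    inpP lam mu n q0 x * Wchan mu n q0 x y ≤ piQ lam mu q0 := by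
  have hmu : (0:ℝ) < mu := h0.trans h1
  calc inpP lam mu n q0 x * Wchan mu n q0 x y
      ≤ inpP lam mu n q0 x * 1 :=
        mul_le_mul_of_nonneg_left (Wchan_le_one hmu.le h2.le n q0 x y)
          (inpP_nonneg h0 h1 h2 n q0 x)
    _ = inpP lam mu n q0 x := mul_one _
    _ ≤ piQ lam mu q0 := inpP_le_piQ h0 h1 h2 n q0 x

lemma summable_main (h0 : 0 < lam) (h1 : lam < mu) (h2 : mu < 1) (k n : ℕ) (y : ℕ → Bool) :
    Summable (fun x : ℕ × (Fin k → Bool) =>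
      inpP lam mu n x.1 (extX k x.2) * Wchan mu n x.1 (extX k x.2) y) := by
  apply (summable_prod_of_nonneg (fun p => term_nonneg h0 h1 h2 n p.1 _ y)).mpr
  refine ⟨fun q0 => Summable.of_finite, ?_⟩
  apply Summable.of_nonneg_of_le
    (f := fun q0 : ℕ => (Fintype.card (Fin k → Bool) : ℝ) * piQ lam mu q0)
    (fun q0 => tsum_nonneg (fun xf => term_nonneg h0 h1 h2 n q0 _ y))
    (fun q0 => ?_) ((summable_piQ h0 h1 h2).mul_left _)
  rw [tsum_fintype]
  calc ∑ xf : Fin k → Bool, inpP lam mu n q0 (extX k xf) * Wchan mu n q0 (extX k xf) y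
      ≤ ∑ _xf : Fin k → Bool, piQ lam mu q0 :=
        Finset.sum_le_sum (fun xf _ => term_le_piQ h0 h1 h2 n q0 _ y)
    _ = (Fintype.card (Fin k → Bool) : ℝ) * piQ lam mu q0 := by
        rw [Finset.sum_const, Finset.card_univ, nsmul_eq_mul]

lemma S_eq (h0 : 0 < lam) (h1 : lam < mu) (h2 : mu < 1) (k n : ℕ) (y : ℕ → Bool) :
    (∑' x : ℕ × (Fin k → Bool),
        inpP lam mu n x.1 (extX k x.2) * Wchan mu n x.1 (extX k x.2) y)
      = ∑' q0 : ℕ, ∑ xf : Fin k → Bool,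
          inpP lam mu n q0 (extX k xf) * Wchan mu n q0 (extX k xf) y := by
  rw [Summable.tsum_prod' (summable_main h0 h1 h2 k n y) (fun q0 => Summable.of_finite)]
  exact tsum_congr fun q0 => tsum_fintype _

lemma burke_base (h0 : 0 < lam) (h1 : lam < mu) (h2 : mu < 1) (y : ℕ → Bool) :
    ∑' q0 : ℕ, piQ lam mu q0 * wdep mu (y 0) (q0 : ℤ)
      = (if y 0 then lam else 1 - lam) := by
  have := step_lemma h0 h1 h2 (fun _ => 1) (fun _ => zero_le_one) (fun _ => le_refl 1) (y 0)
  simp only [mul_one, sub_add_cancel] at this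
  rw [tsum_piQ h0 h1 h2, mul_one] at this
  exact this

lemma extX_succ (m : ℕ) (xf : Fin m → Bool) (i : ℕ) (h : i < m) :
    extX m xf (i + 1) = xf ⟨i, h⟩ := by
  unfold extX
  rw [dif_pos ⟨by omega, by omega⟩]
  all_goals exact congrArg _ (Fin.ext (by simp))

lemma extX_tail (m : ℕ) (x1 : Bool) (rest : Fin m → Bool) :
    ∀ j, 1 ≤ j → extX (m + 1) (Fin.cons x1 rest) (j + 1) = extX m rest j := by
  intro j hj
  by_cases hjm : j ≤ m
  · obtain ⟨k, rfl⟩ : ∃ k, j = k + 1 := ⟨j - 1, by omega⟩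
    rw [extX_succ (m + 1) _ (k + 1) (by omega)]
    rw [show ((⟨k + 1, by omega⟩ : Fin (m + 1))) = Fin.succ ⟨k, by omega⟩ from rfl,
      Fin.cons_succ]
    unfold extX
    rw [dif_pos ⟨by omega, by omega⟩]
    all_goals exact congrArg _ (Fin.ext (by simp))
  · unfold extX
    rw [dif_neg (by omega), dif_neg (by omega)]

lemma qtraj_congr (q0 : ℕ) (x x' y : ℕ → Bool) (hx : ∀ j, 1 ≤ j → x j = x' j) :
    ∀ i, qtraj q0 x y i = qtraj q0 x' y i
  | 0 => rfl
  | (i + 1) => by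
    show qtraj q0 x y i + _ - _ = qtraj q0 x' y i + _ - _
    rw [qtraj_congr q0 x x' y hx i, hx (i + 1) (by omega)]

lemma qtraj_shift (q0 q1 : ℕ) (x y : ℕ → Bool)
    (hq : (q1 : ℤ) = (q0 : ℤ) + (if x 1 then 1 else 0) - (if y 0 then 1 else 0)) :
    ∀ i, qtraj q1 (fun j => x (j + 1)) (fun j => y (j + 1)) i = qtraj q0 x y (i + 1)
  | 0 => by
    show (q1 : ℤ) = qtraj q0 x y 0 + _ - _
    rw [hq]
    rfl
  | (i + 1) => by
    show qtraj q1 _ _ i + _ - _ = qtraj q0 x y (i + 1) + _ - _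
    rw [qtraj_shift q0 q1 x y hq i]

lemma sum_pi_succ {M : Type*} [AddCommMonoid M] (m : ℕ) (f : (Fin (m + 1) → Bool) → M) :
    ∑ xf : Fin (m + 1) → Bool, f xf
      = ∑ p : Bool × (Fin m → Bool), f (Fin.cons p.1 p.2) :=
  (Equiv.sum_comp (Fin.consEquiv (fun _ => Bool)) f).symm

lemma sum_prob (h0 : 0 < lam) (hl1 : lam < 1) (m : ℕ) :
    ∑ rest : Fin m → Bool, ∏ i : Fin m, (if rest i then lam else 1 - lam) = 1 := by
  rw [← Fintype.prod_sum (fun (_ : Fin m) (b : Bool) => if b then lam else 1 - lam)]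
  have : ∀ _i : Fin m, ∑ b : Bool, (if b then lam else 1 - lam) = 1 := by
    intro i
    rw [Fintype.sum_bool]
    norm_num
  rw [Finset.prod_congr rfl (fun i _ => this i)]
  exact Finset.prod_const_one

lemma term_factor (h0 : 0 < lam) (h1 : lam < mu) (h2 : mu < 1)
    (m : ℕ) (y : ℕ → Bool) (q0 : ℕ) (x1 : Bool) (rest : Fin m → Bool) :
    inpP lam mu (m + 2) q0 (extX (m + 1) (Fin.cons x1 rest)) *
        Wchan mu (m + 2) q0 (extX (m + 1) (Fin.cons x1 rest)) y
      = piQ lam mu q0 * ((if x1 then lam else 1 - lam) * (wdep mu (y 0) (q0 : ℤ) *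
          ((∏ i ∈ Finset.range m, (if extX m rest (i + 1) then lam else 1 - lam)) *
            Wchan mu (m + 1) (nq q0 x1 (y 0)) (extX m rest) (fun j => y (j + 1))))) := by
  set xf := extX (m + 1) (Fin.cons x1 rest) with hxf
  have hx1 : xf 1 = x1 := by
    have h := extX_succ (m + 1) (Fin.cons x1 rest) 0 (by omega)
    norm_num at h
    rw [hxf, h]
    all_goals simp [Fin.mk_zero]
  have hp : (∏ i ∈ Finset.range (m + 2 - 1), (if xf (i + 1) then lam else 1 - lam))
      = (if x1 then lam else 1 - lam) *
        ∏ i ∈ Finset.range m, (if extX m rest (i + 1) then lam else 1 - lam) := by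
    show (∏ i ∈ Finset.range (m + 1), (if xf (i + 1) then lam else 1 - lam)) = _
    rw [Finset.prod_range_succ']
    rw [hx1]
    rw [mul_comm]
    congr 1
    apply Finset.prod_congr rfl
    intro i hi
    rw [hxf, extX_tail m x1 rest (i + 1) (by omega)]
  have hW : Wchan mu (m + 2) q0 xf y
      = wdep mu (y 0) (q0 : ℤ) *
        ∏ i ∈ Finset.range (m + 1), wdep mu (y (i + 1)) (qtraj q0 xf y (i + 1)) := by
    unfold Wchan
    rw [Finset.prod_range_succ']
    rw [mul_comm]
    rfl
  by_cases hz : wdep mu (y 0) (q0 : ℤ) = 0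
  · unfold inpP
    rw [hW, hz]
    ring
  · have hnz : ¬(q0 = 0 ∧ y 0 = true) := by
      rintro ⟨hq0, hy0⟩
      rw [hq0, hy0, wdep_cast] at hz
      simp at hz
    have hq : ((nq q0 x1 (y 0) : ℕ) : ℤ)
        = (q0 : ℤ) + (if xf 1 then 1 else 0) - (if y 0 then 1 else 0) := by
      rw [hx1]
      rcases Bool.dichotomy (y 0) with h' | h'
      · rcases Bool.dichotomy x1 with h | h <;> simp [nq, h, h'] <;> omega
      · have hq0' : q0 ≠ 0 := fun hq0'' => hnz ⟨hq0'', h'⟩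
        rcases Bool.dichotomy x1 with h | h <;> simp [nq, h, h'] <;> omega
    have hsh : ∀ i : ℕ, qtraj (nq q0 x1 (y 0)) (extX m rest) (fun j => y (j + 1)) i
        = qtraj q0 xf y (i + 1) := by
      intro i
      rw [← qtraj_shift q0 (nq q0 x1 (y 0)) xf y hq i]
      apply qtraj_congr
      intro j hj
      rw [hxf]
      exact (extX_tail m x1 rest j hj).symm
    have hW2 : (∏ i ∈ Finset.range (m + 1), wdep mu (y (i + 1)) (qtraj q0 xf y (i + 1)))
        = Wchan mu (m + 1) (nq q0 x1 (y 0)) (extX m rest) (fun j => y (j + 1)) := by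
      unfold Wchan
      apply Finset.prod_congr rfl
      intro i _
      rw [hsh i]
    unfold inpP
    rw [hW, hp, hW2]
    ring

end BurkeAux

/-- Burke's theorem, discrete time: with the initial queue length
distributed as `π_Q` and i.i.d. Bernoulli(λ) arrivals, the departures are i.i.d.
Bernoulli(λ): for every `n ≥ 1` and output word `y`,
`∑_x P_X(x) W(y|x) = ∏_{i=0}^{n-1} λ^{ỹ_i} λ̄^{1-ỹ_i}`. -/
theorem burke (lam mu : ℝ) (h0 : 0 < lam) (h1 : lam < mu) (h2 : mu < 1)
    (n : ℕ) (hn : 1 ≤ n) (y : ℕ → Bool) :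
    (∑' x : ℕ × (Fin (n - 1) → Bool),
        inpP lam mu n x.1 (extX (n - 1) x.2) * Wchan mu n x.1 (extX (n - 1) x.2) y) =
      ∏ i ∈ Finset.range n, (if y i then lam else 1 - lam) := by
  have hlam1 : lam < 1 := h1.trans h2
  have hmu : (0:ℝ) < mu := h0.trans h1
  induction n, hn using Nat.le_induction generalizing y with
  | base =>
    rw [BurkeAux.S_eq h0 h1 h2 (1 - 1) 1 y]
    have hterm : ∀ q0 : ℕ,
        (∑ xf : Fin (1 - 1) → Bool,
            inpP lam mu 1 q0 (extX (1 - 1) xf) * Wchan mu 1 q0 (extX (1 - 1) xf) y)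
          = piQ lam mu q0 * wdep mu (y 0) (q0 : ℤ) := by
      intro q0
      have h1t : ∀ xf : Fin (1 - 1) → Bool,
          inpP lam mu 1 q0 (extX (1 - 1) xf) * Wchan mu 1 q0 (extX (1 - 1) xf) y
            = piQ lam mu q0 * wdep mu (y 0) (q0 : ℤ) := by
        intro xf
        simp only [inpP, Wchan]
        norm_num [Finset.prod_range_one]
        left
        rfl
      rw [Finset.sum_congr rfl (fun xf _ => h1t xf), Finset.sum_const, Finset.card_univ]
      have hcard : Fintype.card (Fin (1 - 1) → Bool) = 1 := by simp
      rw [hcard, one_smul]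
    rw [tsum_congr hterm, BurkeAux.burke_base h0 h1 h2 y, Finset.prod_range_one]
  | succ n hn IH =>
    obtain ⟨m, rfl⟩ : ∃ m, n = m + 1 := ⟨n - 1, by omega⟩
    show (∑' x : ℕ × (Fin (m + 1) → Bool),
        inpP lam mu (m + 2) x.1 (extX (m + 1) x.2) *
          Wchan mu (m + 2) x.1 (extX (m + 1) x.2) y)
      = ∏ i ∈ Finset.range (m + 2), (if y i then lam else 1 - lam)
    rw [BurkeAux.S_eq h0 h1 h2 (m + 1) (m + 2) y]
    set G : ℕ → ℝ := fun q1 => ∑ rest : Fin m → Bool,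
        (∏ i ∈ Finset.range m, (if extX m rest (i + 1) then lam else 1 - lam)) *
          Wchan mu (m + 1) q1 (extX m rest) (fun j => y (j + 1)) with hG
    have hprod1 : ∀ rest : Fin m → Bool,
        (∏ i ∈ Finset.range m, (if extX m rest (i + 1) then lam else 1 - lam))
          = ∏ i : Fin m, (if rest i then lam else 1 - lam) := by
      intro rest
      rw [← Fin.prod_univ_eq_prod_range (fun i => if extX m rest (i + 1) then lam else 1 - lam) m]
      apply Finset.prod_congr rfl
      intro i _
      rw [BurkeAux.extX_succ m rest i i.isLt, Fin.eta]
    have hG0 : ∀ q, 0 ≤ G q := by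
      intro q
      rw [hG]
      apply Finset.sum_nonneg
      intro rest _
      exact mul_nonneg (BurkeAux.prodArr_nonneg h0.le hlam1.le m _)
        (BurkeAux.Wchan_nonneg hmu.le h2.le _ _ _ _)
    have hG1 : ∀ q, G q ≤ 1 := by
      intro q
      rw [hG]
      have hb : ∀ rest : Fin m → Bool,
          (∏ i ∈ Finset.range m, (if extX m rest (i + 1) then lam else 1 - lam)) *
              Wchan mu (m + 1) q (extX m rest) (fun j => y (j + 1))
            ≤ ∏ i : Fin m, (if rest i then lam else 1 - lam) := by
        intro rest
        rw [← hprod1 rest]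
        calc (∏ i ∈ Finset.range m, (if extX m rest (i + 1) then lam else 1 - lam)) *
              Wchan mu (m + 1) q (extX m rest) (fun j => y (j + 1))
            ≤ (∏ i ∈ Finset.range m, (if extX m rest (i + 1) then lam else 1 - lam)) * 1 :=
              mul_le_mul_of_nonneg_left (BurkeAux.Wchan_le_one hmu.le h2.le _ _ _ _)
                (BurkeAux.prodArr_nonneg h0.le hlam1.le m _)
          _ = ∏ i ∈ Finset.range m, (if extX m rest (i + 1) then lam else 1 - lam) := mul_one _
      calc (∑ rest : Fin m → Bool,
            (∏ i ∈ Finset.range m, (if extX m rest (i + 1) then lam else 1 - lam)) *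
              Wchan mu (m + 1) q (extX m rest) (fun j => y (j + 1)))
          ≤ ∑ rest : Fin m → Bool, ∏ i : Fin m, (if rest i then lam else 1 - lam) :=
            Finset.sum_le_sum (fun rest _ => hb rest)
        _ = 1 := BurkeAux.sum_prob h0 hlam1 m
    have hstep : ∀ q0 : ℕ,
        (∑ xf : Fin (m + 1) → Bool,
            inpP lam mu (m + 2) q0 (extX (m + 1) xf) * Wchan mu (m + 2) q0 (extX (m + 1) xf) y)
          = piQ lam mu q0 * wdep mu (y 0) (q0 : ℤ) *
            ((1 - lam) * G (BurkeAux.nq q0 false (y 0)) + lam * G (BurkeAux.nq q0 true (y 0))) := by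
      intro q0
      rw [BurkeAux.sum_pi_succ]
      rw [Finset.sum_congr rfl (fun p _ => BurkeAux.term_factor h0 h1 h2 m y q0 p.1 p.2)]
      rw [Fintype.sum_prod_type]
      dsimp only
      have hsum : ∀ x1 : Bool,
          (∑ rest : Fin m → Bool, piQ lam mu q0 * ((if x1 then lam else 1 - lam) *
              (wdep mu (y 0) (q0 : ℤ) *
                ((∏ i ∈ Finset.range m, (if extX m rest (i + 1) then lam else 1 - lam)) *
                  Wchan mu (m + 1) (BurkeAux.nq q0 x1 (y 0)) (extX m rest) (fun j => y (j + 1))))))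
            = piQ lam mu q0 * ((if x1 then lam else 1 - lam) *
                (wdep mu (y 0) (q0 : ℤ) * G (BurkeAux.nq q0 x1 (y 0)))) := by
        intro x1
        simp only [hG]
        rw [← Finset.mul_sum, ← Finset.mul_sum, ← Finset.mul_sum]
      rw [Fintype.sum_bool, hsum true, hsum false]
      norm_num
      ring
    rw [tsum_congr hstep, BurkeAux.step_lemma h0 h1 h2 G hG0 hG1 (y 0)]
    have hpiG : ∀ q : ℕ, (∑ rest : Fin m → Bool,
        inpP lam mu (m + 1) q (extX m rest) *
          Wchan mu (m + 1) q (extX m rest) (fun j => y (j + 1)))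
        = piQ lam mu q * G q := by
      intro q
      simp only [hG]
      rw [Finset.mul_sum]
      apply Finset.sum_congr rfl
      intro rest _
      simp only [inpP, Nat.add_sub_cancel]
      ring
    have hIH : (∑' x : ℕ × (Fin m → Bool),
        inpP lam mu (m + 1) x.1 (extX m x.2) *
          Wchan mu (m + 1) x.1 (extX m x.2) (fun j => y (j + 1)))
        = ∏ i ∈ Finset.range (m + 1), (if y (i + 1) then lam else 1 - lam) :=
      IH (fun j => y (j + 1))
    rw [BurkeAux.S_eq h0 h1 h2 m (m + 1) (fun j => y (j + 1))] at hIH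
    rw [tsum_congr (fun q => (hpiG q).symm), hIH]
    conv_rhs => rw [Finset.prod_range_succ']
    ring
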